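/- Let 𝔽_q be a finite field, χ : 𝔽_q → ℂ a nontrivial additive character, d ≥ 2, and P ∈ 𝔽_q[x₁,…,x_d] a polynomial. For t ∈ 𝔽_q let H_t = {x ∈ 𝔽_q^d : P(x) = t}. Suppose that for some A > 0 one has |Σ_{x∈H_t} χ(m·x)| ≤ A·q^{(d−1)/2} for every t ∈ 𝔽_q and every m ∈ 𝔽_q^d ∖ {0}. Then for all sets E, F ⊆ 𝔽_q^d and every t ∈ 𝔽_q, the counting function ν(t) = |{(x,y) ∈ E × F : P(x−y) = t}| satisfies ν(t) ≤ q^{−d} |E| |F| |H_t| + A·q^{(d−1)/2} √(|E||F|). -/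

import Mathlib

open Finset

set_option linter.unusedSectionVars false

section aux
variable {F : Type} [Field F] [Fintype F] [DecidableEq F] {d : ℕ}

private def dotf (m x : Fin d → F) : F := ∑ i, m i * x i

private lemma dotf_sub_right (m x y : Fin d → F) : dotf m (x - y) = dotf m x - dotf m y := by
  simp [dotf, mul_sub, Finset.sum_sub_distrib]

private lemma dotf_zero_left (x : Fin d → F) : dotf (0 : Fin d → F) x = 0 := by simp [dotf]

private lemma dotf_neg_eq (m x : Fin d → F) : (∑ i, (-m) i * x i) = - dotf m x := by
  simp [dotf, Finset.sum_neg_distrib]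

/-- For fixed `w`, `m ↦ χ (dotf m w)` is an additive character. -/
private def psiw (χ : AddChar F ℂ) (w : Fin d → F) : AddChar (Fin d → F) ℂ where
  toFun m := χ (dotf m w)
  map_zero_eq_one' := by simp [dotf_zero_left]
  map_add_eq_mul' m m' := by
    show χ (dotf (m + m') w) = χ (dotf m w) * χ (dotf m' w)
    have : dotf (m + m') w = dotf m w + dotf m' w := by
      simp [dotf, add_mul, Finset.sum_add_distrib]
    rw [this, AddChar.map_add_eq_mul]

private lemma psiw_ne_one (χ : AddChar F ℂ) (hχ : χ ≠ 1) {w : Fin d → F} (hw : w ≠ 0) :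
    psiw χ w ≠ 1 := by
  obtain ⟨a, ha⟩ := AddChar.ne_one_iff.1 hχ
  obtain ⟨i, hi⟩ : ∃ i, w i ≠ 0 := by
    by_contra h; push_neg at h; exact hw (funext h)
  rw [AddChar.ne_one_iff]
  refine ⟨Pi.single i (a * (w i)⁻¹), ?_⟩
  have h1 : dotf (Pi.single i (a * (w i)⁻¹)) w = a := by
    rw [dotf, Finset.sum_eq_single i]
    · simp only [Pi.single_eq_same]; field_simp
    · intro j _ hj; simp [Pi.single_eq_of_ne hj]
    · simp
  show χ (dotf _ w) ≠ 1
  rw [h1]; exact ha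

private lemma sum_addChar_eq_zero {V : Type} [AddCommGroup V] [Fintype V]
    (ψ : AddChar V ℂ) (h : ψ ≠ 1) : ∑ v, ψ v = 0 := by
  obtain ⟨x, hx⟩ := AddChar.ne_one_iff.1 h
  refine eq_zero_of_mul_eq_self_left hx ?_
  rw [Finset.mul_sum]
  exact Fintype.sum_equiv (Equiv.addLeft x) _ _ fun y ↦ (AddChar.map_add_eq_mul ..).symm

/-- orthogonality -/
private lemma orth (χ : AddChar F ℂ) (hχ : χ ≠ 1) (w : Fin d → F) :
    ∑ m : Fin d → F, χ (dotf m w) =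
      if w = 0 then ((Fintype.card F : ℂ) ^ d) else 0 := by
  split_ifs with h
  · subst h
    have h0 : ∀ m : Fin d → F, dotf m (0 : Fin d → F) = 0 := by intro m; simp [dotf]
    simp only [h0, AddChar.map_zero_eq_one]
    simp [Finset.card_univ]
  · exact sum_addChar_eq_zero (psiw χ w) (psiw_ne_one χ hχ h)

/-- Parseval -/
private lemma parseval (χ : AddChar F ℂ) (hχ : χ ≠ 1) (E : Finset (Fin d → F)) :
    ∑ m : Fin d → F, ‖∑ x ∈ E, χ (dotf m x)‖^2
      = (Fintype.card F : ℝ) ^ d * E.card := by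
  apply Complex.ofReal_injective
  push_cast
  calc (∑ m : Fin d → F, ((‖∑ x ∈ E, χ (dotf m x)‖ : ℝ) : ℂ)^2)
      = ∑ m : Fin d → F, (∑ x ∈ E, χ (dotf m x)) * (starRingEnd ℂ) (∑ x ∈ E, χ (dotf m x)) := by
        refine Finset.sum_congr rfl fun m _ => ?_
        rw [← Complex.ofReal_pow, Complex.sq_norm, Complex.mul_conj]
    _ = ∑ m : Fin d → F, ∑ x ∈ E, ∑ y ∈ E, χ (dotf m (x - y)) := by
        refine Finset.sum_congr rfl fun m _ => ?_
        rw [map_sum, Finset.sum_mul_sum]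
        refine Finset.sum_congr rfl fun x _ => Finset.sum_congr rfl fun y _ => ?_
        rw [dotf_sub_right, sub_eq_add_neg, AddChar.map_add_eq_mul, AddChar.map_neg_eq_conj]
    _ = ∑ x ∈ E, ∑ y ∈ E, ∑ m : Fin d → F, χ (dotf m (x - y)) := by
        rw [Finset.sum_comm]
        exact Finset.sum_congr rfl fun x _ => Finset.sum_comm
    _ = ∑ x ∈ E, ∑ y ∈ E, if x - y = 0 then ((Fintype.card F : ℂ) ^ d) else 0 := by
        refine Finset.sum_congr rfl fun x _ => Finset.sum_congr rfl fun y _ => orth χ hχ _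
    _ = (Fintype.card F : ℂ) ^ d * E.card := by
        have : ∀ x ∈ E, (∑ y ∈ E, if x - y = 0 then ((Fintype.card F : ℂ) ^ d) else 0)
            = (Fintype.card F : ℂ) ^ d := by
          intro x hx
          have : ∀ y, (x - y = 0) = (y = x) := by
            intro y; simp [sub_eq_zero, eq_comm]
          simp only [this]
          rw [Finset.sum_ite_eq' E x (fun _ => ((Fintype.card F : ℂ) ^ d))]
          simp [hx]
        rw [Finset.sum_congr rfl this]
        simp [mul_comm]
end aux



/-- Let `P ∈ 𝔽_q[x₁,…,x_d]`, `d ≥ 2`, and `H_t = {x : P(x) = t}`.  If for some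
`A > 0` one has `|Σ_{x∈H_t} χ(m·x)| ≤ A·q^{(d−1)/2}` for every `t` and every `m ≠ 0`, then for
all `E, F ⊆ 𝔽_q^d` and every `t`, the counting function
`ν(t) = |{(x,y) ∈ E × F : P(x−y) = t}|` satisfies
`ν(t) ≤ q^{−d}·|E|·|F|·|H_t| + A·q^{(d−1)/2}·√(|E||F|)`. -/
theorem stmt_10 {F : Type} [Field F] [Fintype F] [DecidableEq F]
    (χ : AddChar F ℂ) (hχ : χ ≠ 1) (d : ℕ) (hd : 2 ≤ d)
    (P : MvPolynomial (Fin d) F) (A : ℝ) (hA : 0 < A)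
    (Ht : F → Finset (Fin d → F))
    (hHt : ∀ t x, x ∈ Ht t ↔ MvPolynomial.eval x P = t)
    (hdecay : ∀ t : F, ∀ m : Fin d → F, m ≠ 0 →
      ‖∑ x ∈ Ht t, χ (∑ i, m i * x i)‖
        ≤ A * (Fintype.card F : ℝ) ^ (((d : ℝ) - 1) / 2))
    (E G : Finset (Fin d → F)) :
    ∀ t : F,
      ((((E ×ˢ G).filter (fun p => MvPolynomial.eval (p.1 - p.2) P = t)).card : ℝ)
        ≤ ((Fintype.card F : ℝ))⁻¹ ^ d * E.card * G.card * (Ht t).card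
          + A * (Fintype.card F : ℝ) ^ (((d : ℝ) - 1) / 2)
              * Real.sqrt ((E.card : ℝ) * G.card)) := by
  intro t
  set q : ℝ := (Fintype.card F : ℝ) with hq_def
  have hq0 : (0:ℝ) < q := by
    simp only [hq_def]; exact_mod_cast Fintype.card_pos
  have hqd0 : (0:ℝ) < q ^ d := pow_pos hq0 d
  set B : ℝ := A * q ^ (((d : ℝ) - 1) / 2) with hB_def
  set ν : ℕ := ((E ×ˢ G).filter (fun p => MvPolynomial.eval (p.1 - p.2) P = t)).card with hν_def
  set S : (Fin d → F) → ℂ := fun m => ∑ x ∈ E, χ (dotf m x) with hS_def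
  set Sg : (Fin d → F) → ℂ := fun m => ∑ y ∈ G, χ (dotf m y) with hSg_def
  set T : (Fin d → F) → ℂ := fun m => ∑ y ∈ G, χ (- dotf m y) with hT_def
  set K : (Fin d → F) → ℂ := fun m => ∑ z ∈ Ht t, χ (- dotf m z) with hK_def
  -- key identity
  have hν_sum : (ν : ℂ) = ∑ x ∈ E, ∑ y ∈ G,
      (if MvPolynomial.eval (x - y) P = t then (1:ℂ) else 0) := by
    rw [hν_def, Finset.card_filter, ← Finset.sum_product']
    push_cast
    simp
  have key : (ν : ℂ) * (q:ℂ) ^ d = ∑ m : Fin d → F, S m * T m * K m := by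
    have step1 : ∀ m : Fin d → F, S m * T m * K m
        = ∑ x ∈ E, ∑ y ∈ G, ∑ z ∈ Ht t, χ (dotf m (x - y - z)) := by
      intro m
      show (∑ x ∈ E, χ (dotf m x)) * (∑ y ∈ G, χ (-dotf m y))
          * (∑ z ∈ Ht t, χ (-dotf m z)) = _
      rw [Finset.sum_mul_sum, Finset.sum_mul]
      refine Finset.sum_congr rfl fun x _ => ?_
      rw [Finset.sum_mul]
      refine Finset.sum_congr rfl fun y _ => ?_
      rw [Finset.mul_sum]
      refine Finset.sum_congr rfl fun z _ => ?_
      have hd2 : dotf m (x - y - z) = dotf m x + -dotf m y + -dotf m z := by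
        rw [dotf_sub_right, dotf_sub_right]; ring
      rw [hd2, AddChar.map_add_eq_mul, AddChar.map_add_eq_mul]
    calc (ν : ℂ) * (q:ℂ) ^ d
        = ∑ x ∈ E, ∑ y ∈ G,
            (if MvPolynomial.eval (x - y) P = t then ((q:ℂ) ^ d) else 0) := by
          rw [hν_sum, Finset.sum_mul]
          refine Finset.sum_congr rfl fun x _ => ?_
          rw [Finset.sum_mul]
          refine Finset.sum_congr rfl fun y _ => ?_
          split_ifs <;> simp
      _ = ∑ x ∈ E, ∑ y ∈ G, ∑ z ∈ Ht t, ∑ m : Fin d → F, χ (dotf m (x - y - z)) := by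
          refine Finset.sum_congr rfl fun x _ => Finset.sum_congr rfl fun y _ => ?_
          have horth : ∀ z ∈ Ht t, (∑ m : Fin d → F, χ (dotf m (x - y - z)))
              = if z = x - y then ((q:ℂ) ^ d) else 0 := by
            intro z _
            rw [orth χ hχ]
            have hiff : (x - y - z = 0) ↔ (z = x - y) := by
              rw [sub_eq_zero]; exact eq_comm
            simp only [hiff, hq_def]
            push_cast
            rfl
          rw [Finset.sum_congr rfl horth, Finset.sum_ite_eq' (Ht t) (x - y)]
          by_cases hmem : x - y ∈ Ht t
          · rw [if_pos hmem, if_pos ((hHt t (x-y)).1 hmem)]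
          · rw [if_neg hmem, if_neg (fun h => hmem ((hHt t (x-y)).2 h))]
      _ = ∑ m : Fin d → F, S m * T m * K m := by
          simp only [step1]
          refine Eq.symm ?_
          rw [Finset.sum_comm]
          refine Finset.sum_congr rfl fun x _ => ?_
          rw [Finset.sum_comm]
          refine Finset.sum_congr rfl fun y _ => ?_
          rw [Finset.sum_comm]
  -- split off m = 0
  have hS0 : S 0 = (E.card : ℂ) := by simp [hS_def, dotf_zero_left]
  have hT0 : T 0 = (G.card : ℂ) := by simp [hT_def, dotf_zero_left]
  have hK0 : K 0 = ((Ht t).card : ℂ) := by simp [hK_def, dotf_zero_left]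
  have hsplit : ∑ m : Fin d → F, S m * T m * K m
      = (∑ m ∈ Finset.univ.erase 0, S m * T m * K m)
        + (E.card : ℂ) * G.card * (Ht t).card := by
    rw [← hS0, ← hT0, ← hK0]
    exact (Finset.sum_erase_add _ _ (Finset.mem_univ 0)).symm
  set r : ℝ := (ν : ℝ) * q ^ d - (E.card : ℝ) * G.card * (Ht t).card with hr_def
  have hrC : (r : ℂ) = ∑ m ∈ Finset.univ.erase 0, S m * T m * K m := by
    rw [hr_def]
    push_cast
    rw [key, hsplit]
    ring
  -- bound each |K m|
  have hK_bound : ∀ m ∈ Finset.univ.erase (0 : Fin d → F), ‖K m‖ ≤ B := by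
    intro m hm
    have hm0 : m ≠ 0 := Finset.ne_of_mem_erase hm
    have := hdecay t (-m) (neg_ne_zero.2 hm0)
    have hEq : (∑ x ∈ Ht t, χ (∑ i, (-m) i * x i)) = K m := by
      refine Finset.sum_congr rfl fun z _ => ?_
      rw [dotf_neg_eq]
    rwa [hEq] at this
  have hB0 : 0 ≤ B := by
    rw [hB_def]
    positivity
  -- |T m| = |Sg m|
  have hT_abs : ∀ m, ‖T m‖ = ‖Sg m‖ := by
    intro m
    have : T m = (starRingEnd ℂ) (Sg m) := by
      rw [hT_def, hSg_def, map_sum]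
      exact Finset.sum_congr rfl fun y _ => AddChar.map_neg_eq_conj χ _
    rw [this, Complex.norm_conj]
  -- Cauchy-Schwarz + Parseval
  have hCS : ∑ m : Fin d → F, ‖S m‖ * ‖Sg m‖
      ≤ q ^ d * Real.sqrt ((E.card : ℝ) * G.card) := by
    have h1 := Finset.sum_mul_sq_le_sq_mul_sq Finset.univ
      (fun m => ‖S m‖) (fun m => ‖Sg m‖)
    have hPE : ∑ m : Fin d → F, ‖S m‖ ^ 2 = q ^ d * E.card := parseval χ hχ E
    have hPG : ∑ m : Fin d → F, ‖Sg m‖ ^ 2 = q ^ d * G.card := parseval χ hχ G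
    rw [hPE, hPG] at h1
    have hnn : 0 ≤ ∑ m : Fin d → F, ‖S m‖ * ‖Sg m‖ :=
      Finset.sum_nonneg fun m _ => mul_nonneg (norm_nonneg _) (norm_nonneg _)
    have h2 : ∑ m : Fin d → F, ‖S m‖ * ‖Sg m‖
        ≤ Real.sqrt ((q ^ d * E.card) * (q ^ d * G.card)) := by
      rw [← Real.sqrt_sq hnn]
      exact Real.sqrt_le_sqrt h1
    refine h2.trans_eq ?_
    rw [show (q ^ d * (E.card:ℝ)) * (q ^ d * G.card) = (q^d)^2 * ((E.card:ℝ) * G.card) by ring,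
      Real.sqrt_mul (sq_nonneg _), Real.sqrt_sq hqd0.le]
  -- bound |r|
  have hr_bound : |r| ≤ B * (q ^ d * Real.sqrt ((E.card : ℝ) * G.card)) := by
    have h0 : |r| = ‖((r : ℂ))‖ := (Complex.norm_real r).symm
    rw [h0, hrC]
    calc ‖∑ m ∈ Finset.univ.erase 0, S m * T m * K m‖
        ≤ ∑ m ∈ Finset.univ.erase 0, ‖S m * T m * K m‖ :=
          norm_sum_le _ _
      _ ≤ ∑ m ∈ Finset.univ.erase 0, ‖S m‖ * ‖Sg m‖ * B := by
          refine Finset.sum_le_sum fun m hm => ?_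
          rw [norm_mul, norm_mul, hT_abs m]
          exact mul_le_mul_of_nonneg_left (hK_bound m hm)
            (mul_nonneg (norm_nonneg _) (norm_nonneg _))
      _ ≤ ∑ m : Fin d → F, ‖S m‖ * ‖Sg m‖ * B := by
          refine Finset.sum_le_sum_of_subset_of_nonneg (Finset.subset_univ _) fun m _ _ => ?_
          exact mul_nonneg (mul_nonneg (norm_nonneg _) (norm_nonneg _)) hB0
      _ = (∑ m : Fin d → F, ‖S m‖ * ‖Sg m‖) * B := by
          rw [Finset.sum_mul]
      _ ≤ (q ^ d * Real.sqrt ((E.card : ℝ) * G.card)) * B :=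
          mul_le_mul_of_nonneg_right hCS hB0
      _ = B * (q ^ d * Real.sqrt ((E.card : ℝ) * G.card)) := by ring
  -- conclude
  have hfinal : (ν : ℝ) * q ^ d
      ≤ (E.card : ℝ) * G.card * (Ht t).card
        + B * (q ^ d * Real.sqrt ((E.card : ℝ) * G.card)) := by
    have := (abs_le.1 hr_bound).2
    rw [hr_def] at this
    linarith
  have hgoal : (ν : ℝ) ≤ q⁻¹ ^ d * E.card * G.card * (Ht t).card
      + B * Real.sqrt ((E.card : ℝ) * G.card) := by
    rw [inv_pow]
    rw [show (q^d)⁻¹ * (E.card:ℝ) * G.card * (Ht t).card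
      + B * Real.sqrt ((E.card : ℝ) * G.card)
      = ((E.card : ℝ) * G.card * (Ht t).card
        + B * (q ^ d * Real.sqrt ((E.card : ℝ) * G.card))) / q^d by
        field_simp]
    rw [le_div_iff₀ hqd0]
    exact hfinal
  exact hgoal
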